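/- Let λ ≠ 0, m ≠ 1 be real constants, set a = λ(1−m), and fix ε ∈ ℝ. If φ : ℝ × ℝ → ℝ is a positive differentiable solution of u_t + u^{1−m}·u_x + λ·u^m = 0 on ℝ², then the function ψ(x,t) = (φ((x + (a/2)t²(1−e^{ε}))e^{ε}, t e^{ε})^{1−m} − a t(1−e^{ε}))^{1/(1−m)} satisfies the same equation at every point (x,t) where the quantity φ((x + (a/2)t²(1−e^{ε}))e^{ε}, t e^{ε})^{1−m} − a t(1−e^{ε}) is positive. -/

import Mathlib

open Real

/-- case k = 1−m, a = λ(1−m). If φ is a positive differentiable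
solution of `u_t + u^{1−m}·u_x + λ·u^m = 0` on ℝ², then
`ψ(x,t) = (φ((x + (a/2)t²(1−e^ε))e^ε, t e^ε)^{1−m} − a t (1−e^ε))^{1/(1−m)}`
satisfies the same equation at every point where
`φ((x + (a/2)t²(1−e^ε))e^ε, t e^ε)^{1−m} − a t (1−e^ε) > 0`. -/
theorem case3_G8_transformation
    (lam m : ℝ) (hlam : lam ≠ 0) (hm : m ≠ 1) (a : ℝ) (ha : a = lam * (1 - m))
    (ε : ℝ)
    (φ : ℝ × ℝ → ℝ)
    (hφ : Differentiable ℝ φ)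
    (hpos : ∀ x t : ℝ, 0 < φ (x, t))
    (hsol : ∀ x t : ℝ,
      fderiv ℝ φ (x, t) (0, 1) + φ (x, t) ^ (1 - m) * fderiv ℝ φ (x, t) (1, 0)
        + lam * φ (x, t) ^ m = 0) :
    ∀ ψ : ℝ × ℝ → ℝ,
      ψ = (fun p : ℝ × ℝ =>
        (φ ((p.1 + (a / 2) * p.2 ^ 2 * (1 - exp ε)) * exp ε, p.2 * exp ε) ^ (1 - m)
          - a * p.2 * (1 - exp ε)) ^ (1 / (1 - m))) →
      ∀ x t : ℝ,
        0 < φ ((x + (a / 2) * t ^ 2 * (1 - exp ε)) * exp ε, t * exp ε) ^ (1 - m)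
              - a * t * (1 - exp ε) →
        DifferentiableAt ℝ ψ (x, t) ∧
        fderiv ℝ ψ (x, t) (0, 1) + ψ (x, t) ^ (1 - m) * fderiv ℝ ψ (x, t) (1, 0)
          + lam * ψ (x, t) ^ m = 0 := by
  intro ψ hψdef
  subst hψdef
  intro x t hFpos
  have h1m : (1:ℝ) - m ≠ 0 := sub_ne_zero.mpr (Ne.symm hm)
  set c := exp ε with hc
  set X := (x + a / 2 * t ^ 2 * (1 - c)) * c with hX
  set T := t * c with hT
  set G := φ (X, T) with hGdef
  have hGpos : 0 < G := hpos X T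
  set D := fderiv ℝ φ (X, T) with hDdef
  set P := D (1, 0) with hP
  set Q := D (0, 1) with hQ
  have hDlin : ∀ u v : ℝ, D (u, v) = u * P + v * Q := by
    intro u v
    have h : (u, v) = u • ((1:ℝ), (0:ℝ)) + v • ((0:ℝ), (1:ℝ)) := by
      simp [Prod.ext_iff]
    rw [h, map_add, map_smul, map_smul, smul_eq_mul, smul_eq_mul]
  have hsnd : HasFDerivAt (fun p : ℝ × ℝ => p.2) (ContinuousLinearMap.snd ℝ ℝ ℝ) (x, t) :=
    hasFDerivAt_snd
  have hfst : HasFDerivAt (fun p : ℝ × ℝ => p.1) (ContinuousLinearMap.fst ℝ ℝ ℝ) (x, t) :=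
    hasFDerivAt_fst
  have h2 := (hasDerivAt_pow 2 t).comp_hasFDerivAt (x, t) hsnd
  have h3 := (h2.const_mul (a / 2)).mul_const (1 - c)
  have h4 := (hfst.add h3).mul_const c
  have hi2 := hsnd.mul_const c
  have hi := HasFDerivAt.prodMk h4 hi2
  have hφ' : HasFDerivAt φ D (X, T) := (hφ (X, T)).hasFDerivAt
  have hg := hφ'.comp (x, t) hi
  have hGne : (fun p : ℝ × ℝ => φ ((p.1 + a / 2 * p.2 ^ 2 * (1 - c)) * c, p.2 * c)) (x, t) ≠ 0 :=
    ne_of_gt hGpos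
  have hE := hg.rpow_const (p := 1 - m) (Or.inl hGne)
  have hF := hE.sub ((hsnd.const_mul a).mul_const (1 - c))
  have hFne : ((fun p : ℝ × ℝ =>
      φ ((p.1 + a / 2 * p.2 ^ 2 * (1 - c)) * c, p.2 * c) ^ (1 - m) - a * p.2 * (1 - c))) (x, t) ≠ 0 :=
    ne_of_gt hFpos
  have hψ' := hF.rpow_const (p := 1 / (1 - m)) (Or.inl hFne)
  refine ⟨hψ'.differentiableAt, ?_⟩
  have hfd : fderiv ℝ (fun p : ℝ × ℝ =>
      (φ ((p.1 + a / 2 * p.2 ^ 2 * (1 - c)) * c, p.2 * c) ^ (1 - m)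
        - a * p.2 * (1 - c)) ^ (1 / (1 - m))) (x, t) = _ := hψ'.fderiv
  rw [hfd]
  simp only [ContinuousLinearMap.smul_apply, ContinuousLinearMap.sub_apply,
    ContinuousLinearMap.add_apply, ContinuousLinearMap.comp_apply,
    ContinuousLinearMap.prod_apply, ContinuousLinearMap.coe_fst',
    ContinuousLinearMap.coe_snd', smul_eq_mul, Function.comp]
  rw [← hX, ← hT, ← hGdef]
  norm_num
  rw [hDlin, hDlin]
  have he1 : ((1:ℝ)-m)⁻¹ - 1 = m/(1-m) := by field_simp; ring
  have hFle : (0:ℝ) ≤ G ^ (1-m) - a*t*(1-c) := hFpos.le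
  have hpow1 : ((G ^ (1-m) - a*t*(1-c)) ^ (((1:ℝ)-m)⁻¹)) ^ (1-m) = G ^ (1-m) - a*t*(1-c) := by
    rw [← Real.rpow_mul hFle, inv_mul_cancel₀ h1m, Real.rpow_one]
  have hpow2 : ((G ^ (1-m) - a*t*(1-c)) ^ (((1:ℝ)-m)⁻¹)) ^ m
      = (G ^ (1-m) - a*t*(1-c)) ^ (m/(1-m)) := by
    rw [← Real.rpow_mul hFle]
    congr 1
    ring
  have hGm : G ^ (-m) * G ^ m = 1 := by
    rw [← Real.rpow_add hGpos]
    simp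
  have hPDE : Q + G ^ (1-m) * P + lam * G ^ m = 0 := hsol X T
  rw [he1, hpow1, hpow2]
  set Fm := (G ^ (1 - m) - a * t * (1 - c)) ^ (m / (1 - m)) with hFm
  have hinv : (1 - m) * ((1:ℝ) - m)⁻¹ = 1 := mul_inv_cancel₀ h1m
  linear_combination (((1:ℝ)-m)⁻¹ * (1-m) * Fm * c * G ^ (-m)) * hPDE
    + (-(((1:ℝ)-m)⁻¹ * (1-m) * Fm * c * lam)) * hGm
    + (-(lam * Fm)) * hinv
    + (-(((1:ℝ)-m)⁻¹ * (1-c) * Fm)) * ha
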